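/- arXiv:2107.13853 — 3 statements merged into one kernel-verified Lean document; each statement's English description precedes it below -/
import Mathlib

section
/- Let g : ℝⁿ → ℝᵐ be smooth and let q : [0,1] → ℝⁿ and λ : [0,1] → ℝᵐ be smooth. For every smooth variation v : [0,1] → ℝⁿ with v(0) = 0 = v(1) and every smooth w : [0,1] → ℝᵐ, the derivative at ε = 0 of the map ε ↦ S̄(q + εv, λ + εw) exists and equals ∫₀¹ ( −⟨q̈(t) + g'(q(t))ᵀ λ(t), v(t)⟩ − ⟨g(q(t)), w(t)⟩ ) dt, where q̈ denotes the second derivative of q. -/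
open scoped RealInnerProductSpace ContDiff

/-- The extended functional `S̄(q,λ) = ∫₀¹ ( ½‖q̇(t)‖² − ⟨g(q(t)), λ(t)⟩ ) dt`. -/
noncomputable def Sbar {n m : ℕ} (g : EuclideanSpace ℝ (Fin n) → EuclideanSpace ℝ (Fin m))
    (q : ℝ → EuclideanSpace ℝ (Fin n)) (lam : ℝ → EuclideanSpace ℝ (Fin m)) : ℝ :=
  ∫ t in (0:ℝ)..1, ((1 / 2) * ‖deriv q t‖ ^ 2 - ⟪g (q t), lam t⟫)

set_option maxHeartbeats 1000000 in
/-- First variation of the extended functional `S̄`: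
for smooth `g`, `q`, `λ` and every smooth variation `(v, w)` with `v 0 = 0 = v 1`,
the derivative at `ε = 0` of `ε ↦ S̄(q + εv, λ + εw)` exists and equals
`∫₀¹ ( −⟨q̈(t) + g'(q(t))ᵀ λ(t), v(t)⟩ − ⟨g(q(t)), w(t)⟩ ) dt`. -/
theorem first_variation_of_extended_functional {n m : ℕ}
    (g : EuclideanSpace ℝ (Fin n) → EuclideanSpace ℝ (Fin m))
    (hg : ContDiff ℝ (⊤ : ℕ∞) g)
    (q : ℝ → EuclideanSpace ℝ (Fin n)) (lam : ℝ → EuclideanSpace ℝ (Fin m))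
    (hq : ContDiff ℝ (⊤ : ℕ∞) q) (hlam : ContDiff ℝ (⊤ : ℕ∞) lam)
    (v : ℝ → EuclideanSpace ℝ (Fin n)) (w : ℝ → EuclideanSpace ℝ (Fin m))
    (hv : ContDiff ℝ (⊤ : ℕ∞) v) (hw : ContDiff ℝ (⊤ : ℕ∞) w)
    (hv0 : v 0 = 0) (hv1 : v 1 = 0) :
    HasDerivAt
      (fun ε : ℝ => Sbar g (fun t => q t + ε • v t) (fun t => lam t + ε • w t))
      (∫ t in (0:ℝ)..1,
        (-⟪deriv (deriv q) t + (ContinuousLinearMap.adjoint (fderiv ℝ g (q t))) (lam t), v t⟫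
          - ⟪g (q t), w t⟫))
      0 := by
  have hone : ((⊤:ℕ∞) : WithTop ℕ∞) ≠ 0 := by simp
  -- basic differentiability facts
  have hqd : ContDiff ℝ (⊤ : ℕ∞) (deriv q) := (contDiff_infty_iff_deriv.mp hq).2
  have hvd : ContDiff ℝ (⊤ : ℕ∞) (deriv v) := (contDiff_infty_iff_deriv.mp hv).2
  have hqdd : Continuous (deriv (deriv q)) := (contDiff_infty_iff_deriv.mp hqd).2.continuous
  have hgc : Continuous g := hg.continuous
  have hgf : Continuous (fderiv ℝ g) := hg.continuous_fderiv hone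
  -- the integrand family and its ε-derivative
  set F : ℝ → ℝ → ℝ := fun ε t =>
    (1 / 2) * ‖deriv q t + ε • deriv v t‖ ^ 2 - ⟪g (q t + ε • v t), lam t + ε • w t⟫ with hF
  set F' : ℝ → ℝ → ℝ := fun ε t =>
    ⟪deriv q t + ε • deriv v t, deriv v t⟫
      - ⟪(fderiv ℝ g (q t + ε • v t)) (v t), lam t + ε • w t⟫
      - ⟪g (q t + ε • v t), w t⟫ with hF'
  -- Sbar of the perturbed curve equals ∫ F ε
  have hSbar : ∀ ε : ℝ, Sbar g (fun t => q t + ε • v t) (fun t => lam t + ε • w t)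
      = ∫ t in (0:ℝ)..1, F ε t := by
    intro ε
    unfold Sbar
    congr 1
    funext t
    have : deriv (fun t => q t + ε • v t) t = deriv q t + ε • deriv v t := by
      exact ((hq.differentiable hone t).hasDerivAt.add
        (((hv.differentiable hone t).hasDerivAt).const_smul ε)).deriv
    rw [this]
  -- joint continuity of F'
  have hΦ : Continuous (fun p : ℝ × ℝ => F' p.1 p.2) := by
    have h1 : Continuous (fun p : ℝ × ℝ => deriv q p.2 + p.1 • deriv v p.2) :=
      (hqd.continuous.comp continuous_snd).add
        (continuous_fst.smul (hvd.continuous.comp continuous_snd))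
    have h2 : Continuous (fun p : ℝ × ℝ => q p.2 + p.1 • v p.2) :=
      (hq.continuous.comp continuous_snd).add
        (continuous_fst.smul (hv.continuous.comp continuous_snd))
    have h3 : Continuous (fun p : ℝ × ℝ => lam p.2 + p.1 • w p.2) :=
      (hlam.continuous.comp continuous_snd).add
        (continuous_fst.smul (hw.continuous.comp continuous_snd))
    have h4 : Continuous (fun p : ℝ × ℝ => ⟪deriv q p.2 + p.1 • deriv v p.2, deriv v p.2⟫) :=
      h1.inner (hvd.continuous.comp continuous_snd)
    have h5a : Continuous (fun p : ℝ × ℝ => (fderiv ℝ g (q p.2 + p.1 • v p.2)) (v p.2)) :=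
      (hgf.comp h2).clm_apply (hv.continuous.comp continuous_snd)
    have h5 : Continuous (fun p : ℝ × ℝ =>
        ⟪(fderiv ℝ g (q p.2 + p.1 • v p.2)) (v p.2), lam p.2 + p.1 • w p.2⟫) :=
      h5a.inner h3
    have h6 : Continuous (fun p : ℝ × ℝ => ⟪g (q p.2 + p.1 • v p.2), w p.2⟫) :=
      (hgc.comp h2).inner (hw.continuous.comp continuous_snd)
    exact (h4.sub h5).sub h6
  -- continuity of F' ε in t, for each ε
  have hF'cont : ∀ ε : ℝ, Continuous (F' ε) := by
    intro ε
    have : (F' ε) = fun t => F' (ε, t).1 (ε, t).2 := rfl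
    rw [this]
    exact hΦ.comp (Continuous.prodMk_right ε)
  -- continuity of F ε in t
  have hFcont : ∀ ε : ℝ, Continuous (F ε) := by
    intro ε
    have h1 : Continuous (fun t => deriv q t + ε • deriv v t) :=
      hqd.continuous.add (hvd.continuous.const_smul ε)
    have h2 : Continuous (fun t => q t + ε • v t) :=
      hq.continuous.add (hv.continuous.const_smul ε)
    have h3 : Continuous (fun t => lam t + ε • w t) :=
      hlam.continuous.add (hw.continuous.const_smul ε)
    exact (continuous_const.mul ((h1.norm).pow 2)).sub ((hgc.comp h2).inner h3)
  -- bound on the compact set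
  obtain ⟨C, hC⟩ : ∃ C, ∀ p ∈ (Metric.closedBall (0:ℝ) 1 ×ˢ Set.uIcc (0:ℝ) 1),
      ‖F' p.1 p.2‖ ≤ C :=
    ((isCompact_closedBall _ _).prod isCompact_uIcc).exists_bound_of_continuousOn
      hΦ.continuousOn
  -- pointwise derivative in ε
  have h_diff : ∀ t : ℝ, ∀ x : ℝ, HasDerivAt (fun ε => F ε t) (F' x t) x := by
    intro t x
    have hA : HasDerivAt (fun ε : ℝ => deriv q t + ε • deriv v t) (deriv v t) x := by
      simpa using ((hasDerivAt_id x).smul_const (deriv v t)).const_add (deriv q t)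
    have h1 : HasDerivAt (fun ε : ℝ => q t + ε • v t) (v t) x := by
      simpa using ((hasDerivAt_id x).smul_const (v t)).const_add (q t)
    have h3 : HasDerivAt (fun ε : ℝ => lam t + ε • w t) (w t) x := by
      simpa using ((hasDerivAt_id x).smul_const (w t)).const_add (lam t)
    have h2 : HasDerivAt (fun ε : ℝ => g (q t + ε • v t))
        ((fderiv ℝ g (q t + x • v t)) (v t)) x :=
      (hg.differentiable hone (q t + x • v t)).hasFDerivAt.comp_hasDerivAt x h1
    have hsq : HasDerivAt (fun ε : ℝ => (1 / 2 : ℝ) * ‖deriv q t + ε • deriv v t‖ ^ 2)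
        ⟪deriv q t + x • deriv v t, deriv v t⟫ x := by
      have := (hA.inner ℝ hA).const_mul (1 / 2 : ℝ)
      have heq : (fun ε : ℝ => (1 / 2 : ℝ) * ⟪deriv q t + ε • deriv v t,
          deriv q t + ε • deriv v t⟫) = fun ε : ℝ =>
          (1 / 2 : ℝ) * ‖deriv q t + ε • deriv v t‖ ^ 2 := by
        funext ε; rw [real_inner_self_eq_norm_sq]
      rw [heq] at this
      refine this.congr_deriv ?_
      rw [real_inner_comm (deriv q t + x • deriv v t) (deriv v t)]
      ring
    have hin : HasDerivAt (fun ε : ℝ => ⟪g (q t + ε • v t), lam t + ε • w t⟫)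
        (⟪g (q t + x • v t), w t⟫
          + ⟪(fderiv ℝ g (q t + x • v t)) (v t), lam t + x • w t⟫) x :=
      h2.inner ℝ h3
    have := hsq.sub hin
    refine this.congr_deriv ?_
    simp only [hF']
    ring
  -- apply differentiation under the integral sign
  have key := intervalIntegral.hasDerivAt_integral_of_dominated_loc_of_deriv_le
    (F := F) (F' := F') (a := (0:ℝ)) (b := 1) (x₀ := (0:ℝ)) (bound := fun _ => C)
    (μ := MeasureTheory.volume)
    (Metric.ball_mem_nhds 0 one_pos)
    (Filter.Eventually.of_forall fun x => ((hFcont x).aestronglyMeasurable).restrict)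
    ((hFcont 0).intervalIntegrable 0 1)
    ((hF'cont 0).aestronglyMeasurable.restrict)
    (Filter.Eventually.of_forall fun t ht x hx => by
      exact hC (x, t) ⟨Metric.ball_subset_closedBall hx,
        Set.uIoc_subset_uIcc ht⟩)
    (intervalIntegrable_const)
    (Filter.Eventually.of_forall fun t ht x hx => h_diff t x)
  have hDer := key.2
  -- rewrite the function
  have hfun : (fun ε : ℝ => Sbar g (fun t => q t + ε • v t) (fun t => lam t + ε • w t))
      = fun ε : ℝ => ∫ t in (0:ℝ)..1, F ε t := by
    funext ε; exact hSbar ε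
  rw [hfun]
  -- identify the value of the derivative
  have hval : (∫ t in (0:ℝ)..1, F' 0 t)
      = ∫ t in (0:ℝ)..1,
        (-⟪deriv (deriv q) t + (ContinuousLinearMap.adjoint (fderiv ℝ g (q t))) (lam t), v t⟫
          - ⟪g (q t), w t⟫) := by
    -- F' 0 t = target t + d/dt ⟪deriv q t, v t⟫
    have hibp : ∀ t : ℝ, HasDerivAt (fun t => ⟪deriv q t, v t⟫)
        (⟪deriv q t, deriv v t⟫ + ⟪deriv (deriv q) t, v t⟫) t := fun t =>
      ((hqd.differentiable hone t).hasDerivAt).inner ℝ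
        ((hv.differentiable hone t).hasDerivAt)
    have hdcont : Continuous (fun t => ⟪deriv q t, deriv v t⟫ + ⟪deriv (deriv q) t, v t⟫) :=
      ((hqd.continuous.inner hvd.continuous)).add (hqdd.inner hv.continuous)
    have hFTC : (∫ t in (0:ℝ)..1, (⟪deriv q t, deriv v t⟫ + ⟪deriv (deriv q) t, v t⟫)) = 0 := by
      rw [intervalIntegral.integral_eq_sub_of_hasDerivAt
        (fun t _ => hibp t) (hdcont.intervalIntegrable 0 1)]
      simp [hv0, hv1]
    have htgtcont : Continuous (fun t =>
        (-⟪deriv (deriv q) t + (ContinuousLinearMap.adjoint (fderiv ℝ g (q t))) (lam t), v t⟫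
          - ⟪g (q t), w t⟫)) := by
      have hadj : Continuous (fun t =>
          (ContinuousLinearMap.adjoint (fderiv ℝ g (q t))) (lam t)) := by
        exact ((ContinuousLinearMap.adjoint.toLinearIsometry.continuous).comp
          (hgf.comp hq.continuous)).clm_apply hlam.continuous
      exact (((hqdd.add hadj).inner hv.continuous).neg).sub
        ((hgc.comp hq.continuous).inner hw.continuous)
    have hsplit : ∀ t : ℝ, F' 0 t =
        (-⟪deriv (deriv q) t + (ContinuousLinearMap.adjoint (fderiv ℝ g (q t))) (lam t), v t⟫
          - ⟪g (q t), w t⟫)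
        + (⟪deriv q t, deriv v t⟫ + ⟪deriv (deriv q) t, v t⟫) := by
      intro t
      simp only [hF', zero_smul, add_zero]
      have hadj : ⟪(ContinuousLinearMap.adjoint (fderiv ℝ g (q t))) (lam t), v t⟫
          = ⟪(fderiv ℝ g (q t)) (v t), lam t⟫ := by
        rw [ContinuousLinearMap.adjoint_inner_left]
        exact real_inner_comm _ _
      rw [inner_add_left, hadj]
      ring
    calc (∫ t in (0:ℝ)..1, F' 0 t)
        = ∫ t in (0:ℝ)..1,
            ((-⟪deriv (deriv q) t + (ContinuousLinearMap.adjoint (fderiv ℝ g (q t))) (lam t), v t⟫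
              - ⟪g (q t), w t⟫)
            + (⟪deriv q t, deriv v t⟫ + ⟪deriv (deriv q) t, v t⟫)) := by
          congr 1; funext t; exact hsplit t
      _ = (∫ t in (0:ℝ)..1,
            (-⟪deriv (deriv q) t + (ContinuousLinearMap.adjoint (fderiv ℝ g (q t))) (lam t), v t⟫
              - ⟪g (q t), w t⟫))
          + ∫ t in (0:ℝ)..1, (⟪deriv q t, deriv v t⟫ + ⟪deriv (deriv q) t, v t⟫) :=
          intervalIntegral.integral_add (htgtcont.intervalIntegrable 0 1)
            (hdcont.intervalIntegrable 0 1)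
      _ = _ := by rw [hFTC, add_zero]
  rw [← hval]
  exact hDer
end

section
/- Let g : ℝⁿ → ℝᵐ be smooth, let q₀, q_N ∈ ℝⁿ, and let q : [0,1] → ℝⁿ, λ : [0,1] → ℝᵐ be smooth with q(0) = q₀ and q(1) = q_N. Then the following are equivalent: (i) for every smooth v : [0,1] → ℝⁿ with v(0) = 0 = v(1) and every smooth w : [0,1] → ℝᵐ, the derivative at ε = 0 of ε ↦ S̄(q + εv, λ + εw) vanishes; (ii) q̈(t) = −g'(q(t))ᵀ λ(t) and g(q(t)) = 0 for all t ∈ [0,1]. -/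
open scoped RealInnerProductSpace
open MeasureTheory Set

section Aux

/-- Fundamental vanishing lemma: a continuous nonnegative function on `[0,1]` with zero
integral vanishes identically on `[0,1]`. -/
lemma vanish_aux (f : ℝ → ℝ) (hf : Continuous f) (hnn : ∀ t ∈ Set.Icc (0:ℝ) 1, 0 ≤ f t)
    (hz : ∫ t in (0:ℝ)..1, f t = 0) : ∀ t ∈ Set.Icc (0:ℝ) 1, f t = 0 := by
  have hint : IntervalIntegrable f volume 0 1 := hf.intervalIntegrable 0 1
  have hnn' : 0 ≤ᵐ[volume.restrict (Set.Ioc (0:ℝ) 1)] f :=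
    (ae_restrict_iff' measurableSet_Ioc).mpr
      (Filter.Eventually.of_forall fun t ht => hnn t ⟨le_of_lt ht.1, ht.2⟩)
  have hae : f =ᵐ[volume.restrict (Set.Ioc (0:ℝ) 1)] 0 :=
    (intervalIntegral.integral_eq_zero_iff_of_le_of_nonneg_ae zero_le_one hnn' hint).mp hz
  have hmeas : MeasurableSet {s : ℝ | f s ≠ 0} :=
    ((measurableSet_singleton (0:ℝ)).compl.preimage hf.measurable)
  have hnull : volume ({s : ℝ | f s ≠ 0} ∩ Set.Ioc 0 1) = 0 := by
    have := hae
    rw [Filter.EventuallyEq, ae_iff] at this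
    simp only [Pi.zero_apply] at this
    rwa [Measure.restrict_apply hmeas] at this
  have hIoo : ∀ t ∈ Set.Ioo (0:ℝ) 1, f t = 0 := by
    intro t ht
    by_contra hft
    have hUopen : IsOpen ({s : ℝ | f s ≠ 0} ∩ Set.Ioo 0 1) :=
      (isOpen_compl_iff.mpr isClosed_singleton |>.preimage hf).inter isOpen_Ioo
    have hpos := hUopen.measure_pos volume ⟨t, hft, ht⟩
    have : volume ({s : ℝ | f s ≠ 0} ∩ Set.Ioo 0 1) = 0 :=
      measure_mono_null (Set.inter_subset_inter_right _ Set.Ioo_subset_Ioc_self) hnull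
    exact absurd this hpos.ne'
  intro t ht
  have hclosed : IsClosed {t : ℝ | f t = 0} := isClosed_eq hf continuous_const
  have hsub : Set.Icc (0:ℝ) 1 ⊆ {t : ℝ | f t = 0} := by
    rw [← closure_Ioo (by norm_num : (0:ℝ) ≠ 1)]
    exact hclosed.closure_subset_iff.mpr hIoo
  exact hsub ht

variable {E : Type*} [NormedAddCommGroup E] [InnerProductSpace ℝ E]

/-- Integration by parts for the first variation: if `v` vanishes at the endpoints then
`∫₀¹ (⟨q̇, v̇⟩ + ⟨q̈, v⟩) = 0`. -/
lemma ibp_aux (q v : ℝ → E) (hq : ContDiff ℝ (⊤ : ℕ∞) q) (hv : ContDiff ℝ (⊤ : ℕ∞) v)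
    (hv0 : v 0 = 0) (hv1 : v 1 = 0) :
    ∫ t in (0:ℝ)..1, (⟪deriv q t, deriv v t⟫ + ⟪deriv (deriv q) t, v t⟫) = 0 := by
  have hq' : ContDiff ℝ (⊤ : ℕ∞) (deriv q) := (contDiff_infty_iff_deriv.mp hq).2
  have hq'd : Differentiable ℝ (deriv q) := hq'.differentiable (by simp)
  have hvd : Differentiable ℝ v := hv.differentiable (by simp)
  have h : ∀ t ∈ Set.uIcc (0:ℝ) 1,
      HasDerivAt (fun s => ⟪deriv q s, v s⟫)
        (⟪deriv q t, deriv v t⟫ + ⟪deriv (deriv q) t, v t⟫) t :=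
    fun t _ => (hq'd t).hasDerivAt.inner ℝ (hvd t).hasDerivAt
  have hint : IntervalIntegrable
      (fun t => ⟪deriv q t, deriv v t⟫ + ⟪deriv (deriv q) t, v t⟫) volume 0 1 := by
    apply Continuous.intervalIntegrable
    exact (hq'.continuous.inner ((contDiff_infty_iff_deriv.mp hv).2.continuous)).add
      ((hq'.continuous_deriv (by exact_mod_cast le_top)).inner hv.continuous)
  rw [intervalIntegral.integral_eq_sub_of_hasDerivAt h hint, hv0, hv1]
  simp

variable {F : Type*} [NormedAddCommGroup F] [InnerProductSpace ℝ F]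
  [CompleteSpace E] [CompleteSpace F]

/-- The adjoint, bundled as a continuous `ℝ`-linear map on spaces of continuous linear maps. -/
noncomputable def adjCLM (E F : Type*) [NormedAddCommGroup E] [InnerProductSpace ℝ E]
    [NormedAddCommGroup F] [InnerProductSpace ℝ F] [CompleteSpace E] [CompleteSpace F] :
    (E →L[ℝ] F) →L[ℝ] (F →L[ℝ] E) :=
  LinearMap.mkContinuous
    { toFun := fun A => ContinuousLinearMap.adjoint A
      map_add' := fun A B => by simp [map_add]
      map_smul' := fun c A => by simp }
    1 (fun A => by simp)

lemma adjCLM_apply (A : E →L[ℝ] F) : adjCLM E F A = ContinuousLinearMap.adjoint A := rfl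

end Aux

/-- First variation formula: derivative of the perturbed extended functional at `ε = 0`. -/
lemma hasDerivAt_Sbar {n m : ℕ} (g : EuclideanSpace ℝ (Fin n) → EuclideanSpace ℝ (Fin m))
    (hg : ContDiff ℝ (⊤ : ℕ∞) g)
    (q v : ℝ → EuclideanSpace ℝ (Fin n)) (lam w : ℝ → EuclideanSpace ℝ (Fin m))
    (hq : ContDiff ℝ (⊤ : ℕ∞) q) (hlam : ContDiff ℝ (⊤ : ℕ∞) lam)
    (hv : ContDiff ℝ (⊤ : ℕ∞) v) (hw : ContDiff ℝ (⊤ : ℕ∞) w) :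
    HasDerivAt (fun ε : ℝ => Sbar g (fun t => q t + ε • v t) (fun t => lam t + ε • w t))
      (∫ t in (0:ℝ)..1,
        (⟪deriv q t, deriv v t⟫ - ⟪(fderiv ℝ g (q t)) (v t), lam t⟫ - ⟪g (q t), w t⟫)) 0 := by
  have hqd : Differentiable ℝ q := hq.differentiable (by simp)
  have hvd : Differentiable ℝ v := hv.differentiable (by simp)
  have hgd : Differentiable ℝ g := hg.differentiable (by simp)
  have cq' : Continuous (deriv q) := (contDiff_infty_iff_deriv.mp hq).2.continuous
  have cv' : Continuous (deriv v) := (contDiff_infty_iff_deriv.mp hv).2.continuous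
  have cg' : Continuous (fun x => fderiv ℝ g x) :=
    (hg.fderiv_right (le_of_eq (by rfl : ((⊤:ℕ∞):WithTop ℕ∞) + 1 = ((⊤:ℕ∞):WithTop ℕ∞)))).continuous
  set F : ℝ → ℝ → ℝ := fun ε t =>
    (1 / 2) * ‖deriv q t + ε • deriv v t‖ ^ 2 - ⟪g (q t + ε • v t), lam t + ε • w t⟫ with hF
  set F' : ℝ → ℝ → ℝ := fun ε t =>
    (1 / 2) * (⟪deriv q t + ε • deriv v t, deriv v t⟫ + ⟪deriv v t, deriv q t + ε • deriv v t⟫)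
      - (⟪g (q t + ε • v t), w t⟫ + ⟪(fderiv ℝ g (q t + ε • v t)) (v t), lam t + ε • w t⟫)
    with hF'
  have hfun : (fun ε : ℝ => Sbar g (fun t => q t + ε • v t) (fun t => lam t + ε • w t))
      = fun ε : ℝ => ∫ t in (0:ℝ)..1, F ε t := by
    funext ε
    unfold Sbar
    congr 1
    funext t
    have : deriv (fun s => q s + ε • v s) t = deriv q t + ε • deriv v t :=
      ((hqd t).hasDerivAt.add ((hvd t).hasDerivAt.const_smul ε)).deriv
    rw [this]
  have hF'deriv : ∀ (t ε : ℝ), HasDerivAt (fun x => F x t) (F' ε t) ε := by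
    intro t ε
    have h1 : HasDerivAt (fun x : ℝ => deriv q t + x • deriv v t) (deriv v t) ε := by
      simpa using ((hasDerivAt_id ε).smul_const (deriv v t)).const_add (deriv q t)
    have h2 : HasDerivAt (fun x : ℝ => q t + x • v t) (v t) ε := by
      simpa using ((hasDerivAt_id ε).smul_const (v t)).const_add (q t)
    have h3 : HasDerivAt (fun x : ℝ => lam t + x • w t) (w t) ε := by
      simpa using ((hasDerivAt_id ε).smul_const (w t)).const_add (lam t)
    have h4 : HasDerivAt (fun x : ℝ => g (q t + x • v t))
        ((fderiv ℝ g (q t + ε • v t)) (v t)) ε :=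
      (hgd (q t + ε • v t)).hasFDerivAt.comp_hasDerivAt ε h2
    have h5 := h4.inner ℝ h3
    have h6 := (h1.inner ℝ h1).const_mul (1 / 2 : ℝ)
    have h7 := h6.sub h5
    convert h7 using 2 with x
    · rfl
    · rfl
    simp only [hF]
    rw [← real_inner_self_eq_norm_sq]
    rfl
  have hΦ : Continuous (fun p : ℝ × ℝ => F' p.1 p.2) := by
    have c1 : Continuous (fun p : ℝ × ℝ => deriv q p.2 + p.1 • deriv v p.2) :=
      (cq'.comp continuous_snd).add (continuous_fst.smul (cv'.comp continuous_snd))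
    have c2 : Continuous (fun p : ℝ × ℝ => q p.2 + p.1 • v p.2) :=
      (hq.continuous.comp continuous_snd).add
        (continuous_fst.smul (hv.continuous.comp continuous_snd))
    have c3 : Continuous (fun p : ℝ × ℝ => lam p.2 + p.1 • w p.2) :=
      (hlam.continuous.comp continuous_snd).add
        (continuous_fst.smul (hw.continuous.comp continuous_snd))
    have c4 : Continuous (fun p : ℝ × ℝ => (fderiv ℝ g (q p.2 + p.1 • v p.2)) (v p.2)) :=
      (cg'.comp c2).clm_apply (hv.continuous.comp continuous_snd)
    exact (continuous_const.mul ((c1.inner (cv'.comp continuous_snd)).add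
        ((cv'.comp continuous_snd).inner c1))).sub
      (((hg.continuous.comp c2).inner (hw.continuous.comp continuous_snd)).add
        (c4.inner c3))
  obtain ⟨C, hC⟩ := (IsCompact.prod (isCompact_Icc (a := (-1:ℝ)) (b := 1))
      (isCompact_Icc (a := (0:ℝ)) (b := 1))).exists_bound_of_continuousOn hΦ.continuousOn
  rw [hfun]
  have key := intervalIntegral.hasDerivAt_integral_of_dominated_loc_of_deriv_le
    (F := F) (F' := F') (x₀ := (0:ℝ)) (a := (0:ℝ)) (b := 1) (μ := volume)
    (bound := fun _ => C) (s := Metric.ball 0 1) (Metric.ball_mem_nhds 0 one_pos)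
    (Filter.Eventually.of_forall fun x => by
      apply Continuous.aestronglyMeasurable
      exact (continuous_const.mul ((cq'.add (cv'.const_smul x)).norm.pow 2)).sub
        ((hg.continuous.comp (hq.continuous.add (hv.continuous.const_smul x))).inner
          (hlam.continuous.add (hw.continuous.const_smul x))))
    (by
      apply Continuous.intervalIntegrable
      exact (continuous_const.mul ((cq'.add (cv'.const_smul (0:ℝ))).norm.pow 2)).sub
        ((hg.continuous.comp (hq.continuous.add (hv.continuous.const_smul (0:ℝ)))).inner
          (hlam.continuous.add (hw.continuous.const_smul (0:ℝ)))))
    ((hΦ.comp (continuous_const.prodMk continuous_id)).aestronglyMeasurable)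
    (Filter.Eventually.of_forall fun t ht x hx => by
      refine hC (x, t) ⟨?_, ?_⟩
      · have := mem_ball_iff_norm.mp hx
        simp only [sub_zero, Real.norm_eq_abs] at this
        exact ⟨neg_le_of_abs_le this.le, le_of_abs_le this.le⟩
      · rw [Set.uIoc_of_le (zero_le_one)] at ht
        exact ⟨ht.1.le, ht.2⟩)
    (intervalIntegrable_const)
    (Filter.Eventually.of_forall fun t ht x hx => hF'deriv t x)
  refine HasDerivAt.congr_deriv key.2 ?_
  apply intervalIntegral.integral_congr
  intro t ht
  simp only [hF', zero_smul, add_zero]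
  rw [real_inner_comm (deriv v t) (deriv q t)]
  ring

/-- A smooth pair `(q, λ)` with boundary conditions `q 0 = q₀`, `q 1 = q_N` is a stationary
point of the extended functional `S̄` (i.e. the first variation vanishes for all smooth
variations `(v, w)` with `v 0 = 0 = v 1`) if and only if the constrained Euler–Lagrange
equations `q̈ = −g'(q)ᵀ λ` and `g(q) = 0` hold on `[0,1]`. -/
theorem stationary_iff_constrained_EulerLagrange {n m : ℕ}
    (g : EuclideanSpace ℝ (Fin n) → EuclideanSpace ℝ (Fin m))
    (hg : ContDiff ℝ (⊤ : ℕ∞) g)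
    (q₀ qN : EuclideanSpace ℝ (Fin n))
    (q : ℝ → EuclideanSpace ℝ (Fin n)) (lam : ℝ → EuclideanSpace ℝ (Fin m))
    (hq : ContDiff ℝ (⊤ : ℕ∞) q) (hlam : ContDiff ℝ (⊤ : ℕ∞) lam)
    (hq0 : q 0 = q₀) (hq1 : q 1 = qN) :
    (∀ (v : ℝ → EuclideanSpace ℝ (Fin n)) (w : ℝ → EuclideanSpace ℝ (Fin m)),
        ContDiff ℝ (⊤ : ℕ∞) v → ContDiff ℝ (⊤ : ℕ∞) w → v 0 = 0 → v 1 = 0 →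
        HasDerivAt
          (fun ε : ℝ => Sbar g (fun t => q t + ε • v t) (fun t => lam t + ε • w t)) 0 0)
      ↔
    (∀ t ∈ Set.Icc (0:ℝ) 1,
        deriv (deriv q) t = -(ContinuousLinearMap.adjoint (fderiv ℝ g (q t))) (lam t)
          ∧ g (q t) = 0) := by
  have cq' : Continuous (deriv q) := (contDiff_infty_iff_deriv.mp hq).2.continuous
  have hq'' : ContDiff ℝ (⊤ : ℕ∞) (deriv (deriv q)) :=
    (contDiff_infty_iff_deriv.mp (contDiff_infty_iff_deriv.mp hq).2).2
  have cg' : Continuous (fun x => fderiv ℝ g x) :=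
    (hg.fderiv_right (le_of_eq (by rfl : ((⊤:ℕ∞):WithTop ℕ∞) + 1 = ((⊤:ℕ∞):WithTop ℕ∞)))).continuous
  constructor
  · intro hstat
    have hI : ∀ (v : ℝ → EuclideanSpace ℝ (Fin n)) (w : ℝ → EuclideanSpace ℝ (Fin m)),
        ContDiff ℝ (⊤ : ℕ∞) v → ContDiff ℝ (⊤ : ℕ∞) w → v 0 = 0 → v 1 = 0 →
        (∫ t in (0:ℝ)..1,
          (⟪deriv q t, deriv v t⟫ - ⟪(fderiv ℝ g (q t)) (v t), lam t⟫ - ⟪g (q t), w t⟫)) = 0 :=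
      fun v w hv hw hv0 hv1 =>
        (hasDerivAt_Sbar g hg q v lam w hq hlam hv hw).unique (hstat v w hv hw hv0 hv1)
    -- Step 1: the constraint holds
    have hgq0 : ∀ t ∈ Set.Icc (0:ℝ) 1, g (q t) = 0 := by
      have h := hI (fun _ => 0) (fun t => g (q t)) contDiff_const (hg.comp hq) rfl rfl
      have heq : (∫ t in (0:ℝ)..1,
          (⟪deriv q t, deriv (fun _ => (0 : EuclideanSpace ℝ (Fin n))) t⟫
            - ⟪(fderiv ℝ g (q t)) ((fun _ => (0 : EuclideanSpace ℝ (Fin n))) t), lam t⟫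
            - ⟪g (q t), g (q t)⟫))
          = ∫ t in (0:ℝ)..1, -(‖g (q t)‖ ^ 2) := by
        apply intervalIntegral.integral_congr
        intro t _
        dsimp only
        rw [deriv_const, inner_zero_right, map_zero, inner_zero_left,
          real_inner_self_eq_norm_sq]
        ring
      rw [heq, intervalIntegral.integral_neg, neg_eq_zero] at h
      intro t ht
      have h2 := vanish_aux (fun t => ‖g (q t)‖ ^ 2)
        ((hg.continuous.comp hq.continuous).norm.pow 2)
        (fun t _ => by positivity) h t ht
      have h3 : ‖g (q t)‖ = 0 := by nlinarith [norm_nonneg (g (q t))]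
      exact norm_eq_zero.mp h3
    -- Step 2: the Euler–Lagrange equation holds
    set Fc : ℝ → EuclideanSpace ℝ (Fin n) := fun t =>
      deriv (deriv q) t
        + (adjCLM (EuclideanSpace ℝ (Fin n)) (EuclideanSpace ℝ (Fin m)) (fderiv ℝ g (q t)))
            (lam t) with hFcdef
    have hFc : ContDiff ℝ (⊤ : ℕ∞) Fc := by
      apply hq''.add
      exact (((adjCLM (EuclideanSpace ℝ (Fin n)) (EuclideanSpace ℝ (Fin m))).contDiff).comp
        ((hg.fderiv_right
          (le_of_eq (by rfl : ((⊤:ℕ∞):WithTop ℕ∞) + 1 = ((⊤:ℕ∞):WithTop ℕ∞)))).comp hq)).clm_apply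
        hlam
    set v : ℝ → EuclideanSpace ℝ (Fin n) := fun t => (t * (1 - t)) • Fc t with hvdef
    have hvc : ContDiff ℝ (⊤ : ℕ∞) v :=
      ((contDiff_id.mul (contDiff_const.sub contDiff_id)).smul hFc)
    have hv0 : v 0 = 0 := by simp [hvdef]
    have hv1 : v 1 = 0 := by simp [hvdef]
    have h := hI v 0 hvc contDiff_const hv0 hv1
    have hibp := ibp_aux q v hq hvc hv0 hv1
    have hint1 : IntervalIntegrable
        (fun t => ⟪deriv q t, deriv v t⟫ + ⟪deriv (deriv q) t, v t⟫) volume 0 1 := by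
      apply Continuous.intervalIntegrable
      exact (cq'.inner ((contDiff_infty_iff_deriv.mp hvc).2.continuous)).add
        (hq''.continuous.inner hvc.continuous)
    have hint2 : IntervalIntegrable
        (fun t => ⟪deriv q t, deriv v t⟫ - ⟪(fderiv ℝ g (q t)) (v t), lam t⟫
          - ⟪g (q t), (0 : ℝ → EuclideanSpace ℝ (Fin m)) t⟫) volume 0 1 := by
      apply Continuous.intervalIntegrable
      exact ((cq'.inner ((contDiff_infty_iff_deriv.mp hvc).2.continuous)).sub
        (((cg'.comp hq.continuous).clm_apply hvc.continuous).inner hlam.continuous)).sub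
        ((hg.continuous.comp hq.continuous).inner continuous_const)
    have hzz : ∫ t in (0:ℝ)..1, (t * (1 - t)) * ‖Fc t‖ ^ 2 = 0 := by
      have hsub := intervalIntegral.integral_sub hint1 hint2
      rw [h, hibp, sub_zero] at hsub
      have hcongr : (∫ t in (0:ℝ)..1, (t * (1 - t)) * ‖Fc t‖ ^ 2)
          = ∫ t in (0:ℝ)..1,
            ((⟪deriv q t, deriv v t⟫ + ⟪deriv (deriv q) t, v t⟫)
              - (⟪deriv q t, deriv v t⟫ - ⟪(fderiv ℝ g (q t)) (v t), lam t⟫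
                - ⟪g (q t), (0 : ℝ → EuclideanSpace ℝ (Fin m)) t⟫)) := by
        apply intervalIntegral.integral_congr
        intro t _
        dsimp only
        have hadj : ⟪(fderiv ℝ g (q t)) (v t), lam t⟫
            = ⟪(ContinuousLinearMap.adjoint (fderiv ℝ g (q t))) (lam t), v t⟫ := by
          rw [ContinuousLinearMap.adjoint_inner_left, real_inner_comm]
        have hvinner : ⟪Fc t, v t⟫ = (t * (1 - t)) * ‖Fc t‖ ^ 2 := by
          simp only [hvdef, real_inner_smul_right, real_inner_self_eq_norm_sq]
        rw [Pi.zero_apply, inner_zero_right, sub_zero, hadj, ← hvinner]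
        simp only [hFcdef, inner_add_left, adjCLM_apply]
        ring
      rw [hcongr, hsub]
    have hvan := vanish_aux (fun t => (t * (1 - t)) * ‖Fc t‖ ^ 2)
      ((continuous_id.mul (continuous_const.sub continuous_id)).mul
        (hFc.continuous.norm.pow 2))
      (fun t ht => by
        have h1 : 0 ≤ t * (1 - t) := mul_nonneg ht.1 (by linarith [ht.2])
        exact mul_nonneg h1 (by positivity)) hzz
    have hFcIoo : ∀ t ∈ Set.Ioo (0:ℝ) 1, Fc t = 0 := by
      intro t ht
      have h1 := hvan t ⟨ht.1.le, ht.2.le⟩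
      have hpos : 0 < t * (1 - t) := mul_pos ht.1 (by linarith [ht.2])
      have h2 : ‖Fc t‖ ^ 2 = 0 := (mul_eq_zero.mp h1).resolve_left hpos.ne'
      have h3 : ‖Fc t‖ = 0 := by nlinarith [norm_nonneg (Fc t)]
      exact norm_eq_zero.mp h3
    have hFcIcc : ∀ t ∈ Set.Icc (0:ℝ) 1, Fc t = 0 := by
      have hclosed : IsClosed {t : ℝ | Fc t = 0} := isClosed_eq hFc.continuous continuous_const
      have hsub : Set.Icc (0:ℝ) 1 ⊆ {t : ℝ | Fc t = 0} := by
        rw [← closure_Ioo (by norm_num : (0:ℝ) ≠ 1)]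
        exact hclosed.closure_subset_iff.mpr hFcIoo
      exact fun t ht => hsub ht
    intro t ht
    refine ⟨?_, hgq0 t ht⟩
    have := hFcIcc t ht
    rw [hFcdef] at this
    simp only [adjCLM_apply] at this
    exact eq_neg_of_add_eq_zero_left this
  · intro hEL v w hv hw hv0 hv1
    have key := hasDerivAt_Sbar g hg q v lam w hq hlam hv hw
    have hzero : (∫ t in (0:ℝ)..1,
        (⟪deriv q t, deriv v t⟫ - ⟪(fderiv ℝ g (q t)) (v t), lam t⟫ - ⟪g (q t), w t⟫)) = 0 := by
      have heq : (∫ t in (0:ℝ)..1,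
          (⟪deriv q t, deriv v t⟫ - ⟪(fderiv ℝ g (q t)) (v t), lam t⟫ - ⟪g (q t), w t⟫))
          = ∫ t in (0:ℝ)..1, (⟪deriv q t, deriv v t⟫ + ⟪deriv (deriv q) t, v t⟫) := by
        apply intervalIntegral.integral_congr
        intro t ht
        rw [Set.uIcc_of_le zero_le_one] at ht
        obtain ⟨hEL1, hEL2⟩ := hEL t ht
        dsimp only
        have hadj : ⟪(fderiv ℝ g (q t)) (v t), lam t⟫
            = ⟪(ContinuousLinearMap.adjoint (fderiv ℝ g (q t))) (lam t), v t⟫ := by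
          rw [ContinuousLinearMap.adjoint_inner_left, real_inner_comm]
        rw [hadj, hEL2]
        rw [show (ContinuousLinearMap.adjoint (fderiv ℝ g (q t))) (lam t)
            = -(deriv (deriv q) t) from by rw [hEL1]; simp]
        simp [inner_neg_left]
      rw [heq]
      exact ibp_aux q v hq hv hv0 hv1
    rw [hzero] at key
    exact key
end

section
/- Let g : ℝⁿ → ℝᵐ be smooth, Δt > 0, and N ≥ 2. Suppose sequences (q_k)_{k=0}^{N} in ℝⁿ, (u_k)_{k=0}^{N−1} in ℝⁿ, (μ_k)_{k=0}^{N−1} in ℝⁿ, and (λ_k)_{k=1}^{N−1} in ℝᵐ satisfy the discrete Karush–Kuhn–Tucker conditions: q_{k+1} − q_k − Δt u_k = 0 for all k ∈ {0,…,N−1}, u_k − Δt μ_k = 0 for all k ∈ {0,…,N−1}, and −g'(q_k)ᵀ λ_k − μ_k + μ_{k−1} = 0 together with g(q_k) = 0 for all k ∈ {1,…,N−1}. Then μ_k = (q_{k+1} − q_k)/Δt² for all k ∈ {0,…,N−1}, and the pair of sequences (q_k), (λ_k) satisfies the discrete Euler–Lagrange equations (q_{k+1} − 2q_k + q_{k−1})/Δt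 + Δt g'(q_k)ᵀ λ_k = 0 and g(q_k) = 0 for all k ∈ {1,…,N−1}. -/
open scoped RealInnerProductSpace

/-- The direct (KKT) discretisation recovers the discrete Euler–Lagrange scheme:
if `q_{k+1} − q_k − Δt u_k = 0` and `u_k − Δt μ_k = 0` for `k ∈ {0,…,N−1}`, and
`−g'(q_k)ᵀ λ_k − μ_k + μ_{k−1} = 0`, `g(q_k) = 0` for `k ∈ {1,…,N−1}`, then
`μ_k = (q_{k+1} − q_k)/Δt²` for `k ∈ {0,…,N−1}` and `(q_k)`, `(λ_k)` satisfy the discrete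
Euler–Lagrange equations `(q_{k+1} − 2q_k + q_{k−1})/Δt + Δt g'(q_k)ᵀ λ_k = 0`,
`g(q_k) = 0` for `k ∈ {1,…,N−1}`. -/
theorem discrete_KKT_implies_discrete_EL {n m : ℕ}
    (g : EuclideanSpace ℝ (Fin n) → EuclideanSpace ℝ (Fin m))
    (hg : ContDiff ℝ (⊤ : ℕ∞) g)
    (Δt : ℝ) (hΔt : 0 < Δt) (N : ℕ) (hN : 2 ≤ N)
    (q u μ : ℕ → EuclideanSpace ℝ (Fin n)) (lam : ℕ → EuclideanSpace ℝ (Fin m))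
    (hstate : ∀ k ≤ N - 1, q (k + 1) - q k - Δt • u k = 0)
    (hcontrol : ∀ k ≤ N - 1, u k - Δt • μ k = 0)
    (hadjoint : ∀ k ∈ Finset.Icc 1 (N - 1),
      -(ContinuousLinearMap.adjoint (fderiv ℝ g (q k))) (lam k) - μ k + μ (k - 1) = 0)
    (hconstraint : ∀ k ∈ Finset.Icc 1 (N - 1), g (q k) = 0) :
    (∀ k ≤ N - 1, μ k = (Δt ^ 2)⁻¹ • (q (k + 1) - q k)) ∧
    (∀ k ∈ Finset.Icc 1 (N - 1),
      Δt⁻¹ • (q (k + 1) - (2:ℝ) • q k + q (k - 1))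
        + Δt • (ContinuousLinearMap.adjoint (fderiv ℝ g (q k))) (lam k) = 0 ∧
      g (q k) = 0) := by

  have hmu : ∀ k ≤ N - 1, μ k = (Δt ^ 2)⁻¹ • (q (k + 1) - q k) := by
    intro k hk
    have h1 := hstate k hk
    have h2 := hcontrol k hk
    have hq : q (k + 1) - q k = (Δt ^ 2) • μ k := by
      have hu : u k = Δt • μ k := by linear_combination (norm := module) h2
      have : q (k + 1) - q k = Δt • u k := by linear_combination (norm := module) h1
      rw [this, hu, smul_smul]; ring_nf
    rw [hq, smul_smul, inv_mul_cancel₀ (by positivity), one_smul]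
  refine ⟨hmu, fun k hk => ?_⟩
  obtain ⟨hk1, hk2⟩ := Finset.mem_Icc.mp hk
  refine ⟨?_, hconstraint k hk⟩
  have hkm : k - 1 ≤ N - 1 := le_trans (Nat.sub_le k 1) hk2
  have hadj := hadjoint k hk
  have e1 : q (k + 1) - q k = (Δt ^ 2) • μ k := by
    rw [hmu k hk2, smul_smul, mul_inv_cancel₀ (by positivity), one_smul]
  have e2 : q (k - 1 + 1) - q (k - 1) = (Δt ^ 2) • μ (k - 1) := by
    rw [hmu (k - 1) hkm, smul_smul, mul_inv_cancel₀ (by positivity), one_smul]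
  rw [Nat.sub_add_cancel hk1] at e2
  have hA : (ContinuousLinearMap.adjoint (fderiv ℝ g (q k))) (lam k)
      = μ (k - 1) - μ k := by linear_combination (norm := module) -hadj
  rw [hA]
  have hne : Δt ≠ 0 := ne_of_gt hΔt
  have key : q (k + 1) - (2:ℝ) • q k + q (k - 1)
      = (Δt ^ 2) • μ k - (Δt ^ 2) • μ (k - 1) := by
    rw [show q (k + 1) - (2:ℝ) • q k + q (k - 1)
        = (q (k + 1) - q k) - (q k - q (k - 1)) by
          rw [two_smul]; abel, e1, e2]
  rw [key]
  match_scalars <;> field_simp <;> ring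
end
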